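/- (Proposition 2 with delay operators, exponential convergence under persistent excitation.) Let q ≥ 1, let r ∈ ℝ^q, let m : ℝ → ℝ^q be bounded and continuous, and let ρ : ℝ → ℝ satisfy ρ(t) = m(t)ᵀ r for all t ∈ ℝ. Let d_1,…,d_{q−1} > 0 be pairwise distinct delays, and define M_e(t) ∈ ℝ^{q×q} with first row m(t)ᵀ and (j+1)-th row m(t−d_j)ᵀ, R_e(t) = (ρ(t), ρ(t−d_1),…,ρ(t−d_{q−1}))ᵀ, ψ(t) = det M_e(t), and R(t) = adj(M_e(t)) R_e(t). Let k_1,…,k_q > 0 and let r̂ : ℝ → ℝ^q be differentiable on [0,∞) with r̂_i'(t) = k_i ψ(t) (R_i(t) − ψ(t) r̂_i(t)) for all t ≥ 0, i = 1,…,q. If ψ is persistently exciting, i.e. there exist T, δ > 0 with ∫_t^{t+T} ψ(s)² ds ≥ δ for all t ≥ 0, then each r̂_i converges to r_i exponentially fast: there exist C ≥ 0 and λ > 0 such that |r̂_i(t) − r_i| ≤ C e^{−λ t} for all t ≥ 0 and all i. -/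

import Mathlib

/-- Proposition 2 with delay operators, exponential convergence:
DREM with `q-1` pairwise-distinct delays; if `ψ = det M_e` is persistently
exciting then every component of the estimator converges exponentially fast. -/
theorem statement9 (q : ℕ) (hq : 1 ≤ q) (r : Fin q → ℝ)
    (m : ℝ → Fin q → ℝ) (hm_cont : Continuous m)
    (hm_bdd : ∃ c : ℝ, ∀ t i, |m t i| ≤ c)
    (ρ : ℝ → ℝ) (hρ : ∀ t, ρ t = ∑ i, m t i * r i)
    (d : Fin (q - 1) → ℝ) (hd_pos : ∀ j, d j > 0) (hd_dist : Function.Injective d)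
    (Me : ℝ → Matrix (Fin q) (Fin q) ℝ)
    (hMe : ∀ t (i j : Fin q), Me t i j =
      if h : (i : ℕ) = 0 then m t j else m (t - d ⟨(i : ℕ) - 1, by omega⟩) j)
    (Re : ℝ → Fin q → ℝ)
    (hRe : ∀ t (i : Fin q), Re t i =
      if h : (i : ℕ) = 0 then ρ t else ρ (t - d ⟨(i : ℕ) - 1, by omega⟩))
    (ψ : ℝ → ℝ) (hψ : ∀ t, ψ t = (Me t).det)
    (R : ℝ → Fin q → ℝ) (hR : ∀ t, R t = (Me t).adjugate.mulVec (Re t))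
    (k : Fin q → ℝ) (hk : ∀ i, k i > 0)
    (rhat : ℝ → Fin q → ℝ)
    (hrhat : ∀ t ≥ (0 : ℝ), ∀ i : Fin q,
      HasDerivAt (fun s => rhat s i) (k i * ψ t * (R t i - ψ t * rhat t i)) t)
    (T δ : ℝ) (hT : T > 0) (hδ : δ > 0)
    (hPE : ∀ t ≥ (0 : ℝ), δ ≤ ∫ s in t..(t + T), (ψ s) ^ 2) :
    ∃ C ≥ (0 : ℝ), ∃ lam > (0 : ℝ), ∀ t ≥ (0 : ℝ), ∀ i : Fin q,
      |rhat t i - r i| ≤ C * Real.exp (-lam * t) := by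
  haveI : NeZero q := ⟨by omega⟩
  -- ψ is continuous
  have hMe_cont : Continuous fun t => Me t := by
    apply continuous_matrix
    intro i j
    by_cases h : (i : ℕ) = 0
    · have : (fun t => Me t i j) = fun t => m t j := by
        funext t; rw [hMe, dif_pos h]
      rw [this]; exact (continuous_apply j).comp hm_cont
    · have : (fun t => Me t i j) =
          fun t => m (t - d ⟨(i : ℕ) - 1, by omega⟩) j := by
        funext t; rw [hMe, dif_neg h]
      rw [this]
      exact ((continuous_apply j).comp hm_cont).comp (continuous_id.sub continuous_const)
  have hψc : Continuous ψ := by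
    have : ψ = fun t => (Me t).det := funext hψ
    rw [this]; exact hMe_cont.matrix_det
  have hψ2c : Continuous fun s => ψ s ^ 2 := hψc.pow 2
  -- R t i = ψ t * r i
  have hRe_eq : ∀ t, Re t = (Me t).mulVec r := by
    intro t; funext i
    simp only [Matrix.mulVec, dotProduct]
    rw [hRe]
    split_ifs with h
    · rw [hρ]; exact Finset.sum_congr rfl fun j _ => by simp only [hMe, dif_pos h]
    · rw [hρ]; exact Finset.sum_congr rfl fun j _ => by simp only [hMe, dif_neg h]
  have hRr : ∀ t i, R t i = ψ t * r i := by
    intro t i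
    have : R t = (ψ t) • r := by
      rw [hR, hRe_eq, Matrix.mulVec_mulVec, Matrix.adjugate_mul, hψ]
      rw [Matrix.smul_mulVec, Matrix.one_mulVec]
    rw [this]; rfl
  -- the integral F
  set F : ℝ → ℝ := fun t => ∫ s in (0:ℝ)..t, ψ s ^ 2 with hFdef
  have hInt : ∀ a b : ℝ, IntervalIntegrable (fun s => ψ s ^ 2) MeasureTheory.volume a b :=
    fun a b => hψ2c.intervalIntegrable a b
  have hF : ∀ t, HasDerivAt F (ψ t ^ 2) t := fun t =>
    intervalIntegral.integral_hasDerivAt_right (hInt 0 t)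
      (hψ2c.stronglyMeasurableAtFilter _ _) hψ2c.continuousAt
  have hFadd : ∀ a b : ℝ, F b = F a + ∫ s in a..b, ψ s ^ 2 := by
    intro a b
    have := intervalIntegral.integral_add_adjacent_intervals (hInt 0 a) (hInt a b)
    simp only [hFdef]; linarith [this]
  have hFmono : ∀ a b : ℝ, a ≤ b → F a ≤ F b := by
    intro a b hab
    have h0 : 0 ≤ ∫ s in a..b, ψ s ^ 2 :=
      intervalIntegral.integral_nonneg hab fun x _ => sq_nonneg _
    rw [hFadd a b]; linarith
  have hF0 : F 0 = 0 := intervalIntegral.integral_same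
  have hFn : ∀ n : ℕ, (n : ℝ) * δ ≤ F (n * T) := by
    intro n
    induction n with
    | zero => simp [hF0]
    | succ n ih =>
      have hpe := hPE ((n : ℝ) * T) (by positivity)
      have heq : ((n : ℝ) + 1) * T = (n : ℝ) * T + T := by ring
      have h2 := hFadd ((n : ℝ) * T) ((n : ℝ) * T + T)
      push_cast
      rw [heq, h2]; linarith
  have hFlow : ∀ t ≥ (0:ℝ), δ * (t / T - 1) ≤ F t := by
    intro t ht
    set n := Nat.floor (t / T) with hn
    have hdiv : (0:ℝ) ≤ t / T := div_nonneg ht hT.le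
    have h1 : (n : ℝ) * T ≤ t := by
      have := Nat.floor_le hdiv
      calc (n : ℝ) * T ≤ (t / T) * T := by nlinarith
        _ = t := by field_simp
    have h2 : t / T - 1 ≤ (n : ℝ) := (Nat.sub_one_lt_floor (t / T)).le
    calc δ * (t / T - 1) ≤ δ * n := by nlinarith
      _ = (n : ℝ) * δ := mul_comm _ _
      _ ≤ F ((n : ℝ) * T) := hFn n
      _ ≤ F t := hFmono _ _ h1
  have hFnn : ∀ t ≥ (0:ℝ), 0 ≤ F t := fun t ht => by
    have := hFmono 0 t ht; rw [hF0] at this; exact this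
  -- solve the ODE: for t ≥ 0, rhat t i - r i = (rhat 0 i - r i) * exp (-(k i * F t))
  have key : ∀ t ≥ (0:ℝ), ∀ i, rhat t i - r i = (rhat 0 i - r i) * Real.exp (-(k i * F t)) := by
    intro t ht i
    set g : ℝ → ℝ := fun s => (rhat s i - r i) * Real.exp (k i * F s) with hg
    have hgd : ∀ s ≥ (0:ℝ), HasDerivAt g 0 s := by
      intro s hs
      have he : HasDerivAt (fun u => rhat u i - r i)
          (-(k i * ψ s ^ 2) * (rhat s i - r i)) s := by
        have := (hrhat s hs i).sub_const (r i)
        rw [show (-(k i * ψ s ^ 2) * (rhat s i - r i)) = k i * ψ s * (R s i - ψ s * rhat s i) by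
          rw [hRr]; ring]
        exact this
      have hex : HasDerivAt (fun u => Real.exp (k i * F u))
          (Real.exp (k i * F s) * (k i * ψ s ^ 2)) s :=
        (((hF s).const_mul (k i)).exp)
      have := he.mul hex
      have h0 : (-(k i * ψ s ^ 2) * (rhat s i - r i)) * Real.exp (k i * F s) +
          (rhat s i - r i) * (Real.exp (k i * F s) * (k i * ψ s ^ 2)) = 0 := by ring
      rw [h0] at this
      exact this
    have hconst : g t = g 0 := by
      have := constant_of_has_deriv_right_zero (f := g) (a := 0) (b := t)
        (fun x hx => (hgd x hx.1).continuousAt.continuousWithinAt)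
        (fun x hx => (hgd x hx.1).hasDerivWithinAt)
      exact this t ⟨ht, le_refl t⟩
    have hge : (rhat t i - r i) * Real.exp (k i * F t) = (rhat 0 i - r i) * Real.exp (k i * F 0) :=
      hconst
    rw [hF0, mul_zero, Real.exp_zero, mul_one] at hge
    have hne : Real.exp (k i * F t) ≠ 0 := (Real.exp_pos _).ne'
    rw [Real.exp_neg, ← hge, mul_assoc, mul_inv_cancel₀ hne, mul_one]
  -- assemble constants
  have hne : (Finset.univ : Finset (Fin q)).Nonempty := Finset.univ_nonempty
  set kmin : ℝ := Finset.univ.inf' hne k with hkmin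
  have hkminpos : 0 < kmin := by
    rw [hkmin, Finset.lt_inf'_iff]
    exact fun i _ => hk i
  have hkminle : ∀ i, kmin ≤ k i := fun i => Finset.inf'_le k (Finset.mem_univ i)
  set B : ℝ := Finset.univ.sup' hne (fun i => |rhat 0 i - r i|) with hB
  have hBle : ∀ i, |rhat 0 i - r i| ≤ B := fun i =>
    Finset.le_sup' (fun i => |rhat 0 i - r i|) (Finset.mem_univ i)
  have hBnn : 0 ≤ B := le_trans (abs_nonneg _) (hBle ⟨0, by omega⟩)
  refine ⟨B * Real.exp (kmin * δ), by positivity, kmin * δ / T, by positivity, ?_⟩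
  intro t ht i
  rw [key t ht i, abs_mul, Real.abs_exp]
  have hexp1 : Real.exp (-(k i * F t)) ≤ Real.exp (-(kmin * F t)) := by
    apply Real.exp_le_exp.2
    have := hFnn t ht
    nlinarith [hkminle i]
  have hexp2 : Real.exp (-(kmin * F t)) ≤ Real.exp (-(kmin * (δ * (t / T - 1)))) := by
    apply Real.exp_le_exp.2
    nlinarith [hFlow t ht, hkminpos]
  have hfin : Real.exp (-(kmin * (δ * (t / T - 1)))) =
      Real.exp (kmin * δ) * Real.exp (-(kmin * δ / T) * t) := by
    rw [← Real.exp_add]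
    congr 1
    field_simp
    ring
  calc |rhat 0 i - r i| * Real.exp (-(k i * F t))
      ≤ B * Real.exp (-(kmin * (δ * (t / T - 1)))) := by
        apply mul_le_mul (hBle i) (le_trans hexp1 hexp2) (Real.exp_pos _).le hBnn
    _ = B * Real.exp (kmin * δ) * Real.exp (-(kmin * δ / T) * t) := by rw [hfin]; ring
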